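/- Let n, k ≥ 1, let m ∈ ℝ^{n×k} with moment matrix M, let B = {T_1, …, T_r} be a collection of subsets of [n], and let J = T_1 ∪ ⋯ ∪ T_r. Suppose that: (1) the vectors M_{T_1}, …, M_{T_r} are linearly independent and every M_S with S ⊆ J lies in their span; and (2) for every T_ℓ ∈ B and every j ∈ [n]∖J, the vector M_{T_ℓ ∪ {j}} lies in span{M_{T_1}, …, M_{T_r}}. Then M_{T_1}, …, M_{T_r} form a basis for the row space of M, i.e., every M_S with S ⊆ [n] lies in span{M_{T_1}, …, M_{T_r}}. -/

import Mathlib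

/-- if the rows `M_{T_1}, …, M_{T_r}` of the moment matrix are linearly
independent and span every `M_S` with `S ⊆ J = T_1 ∪ ⋯ ∪ T_r`, and moreover every
`M_{T_ℓ ∪ {j}}` with `j ∉ J` lies in their span, then they form a basis for the row space of
the moment matrix. -/
theorem stmt_7 (n k : ℕ) (hn : 1 ≤ n) (hk : 1 ≤ k)
    (m : Fin n → Fin k → ℝ) (r : ℕ) (T : Fin r → Finset (Fin n))
    (hindep : LinearIndependent ℝ (fun ℓ : Fin r => fun j : Fin k => ∏ i ∈ T ℓ, m i j))
    (hJ : ∀ S : Finset (Fin n), S ⊆ Finset.univ.biUnion T →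
      (fun j => ∏ i ∈ S, m i j) ∈
        Submodule.span ℝ (Set.range (fun ℓ : Fin r => fun j : Fin k => ∏ i ∈ T ℓ, m i j)))
    (hext : ∀ ℓ : Fin r, ∀ j0 : Fin n, j0 ∉ Finset.univ.biUnion T →
      (fun j => ∏ i ∈ T ℓ ∪ {j0}, m i j) ∈
        Submodule.span ℝ (Set.range (fun ℓ : Fin r => fun j : Fin k => ∏ i ∈ T ℓ, m i j))) :
    ∀ S : Finset (Fin n),
      (fun j => ∏ i ∈ S, m i j) ∈
        Submodule.span ℝ (Set.range (fun ℓ : Fin r => fun j : Fin k => ∏ i ∈ T ℓ, m i j)) := by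
  set J := Finset.univ.biUnion T with hJdef
  set V := Submodule.span ℝ
    (Set.range (fun ℓ : Fin r => fun j : Fin k => ∏ i ∈ T ℓ, m i j)) with hVdef
  suffices H : ∀ c : ℕ, ∀ S : Finset (Fin n), (S \ J).card ≤ c →
      (fun j => ∏ i ∈ S, m i j) ∈ V by
    exact fun S => H (S \ J).card S le_rfl
  intro c
  induction c with
  | zero =>
    intro S hS
    apply hJ
    intro x hx
    by_contra hxJ
    have : x ∈ S \ J := Finset.mem_sdiff.mpr ⟨hx, hxJ⟩
    have := Finset.card_pos.mpr ⟨x, this⟩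
    omega
  | succ c ih =>
    intro S hS
    by_cases hsub : S ⊆ J
    · exact hJ S hsub
    · obtain ⟨j0, hj0S, hj0J⟩ : ∃ j0, j0 ∈ S ∧ j0 ∉ J := by
        simpa [Finset.subset_iff] using hsub
      set S' := S.erase j0 with hS'
      have hcard : (S' \ J).card ≤ c := by
        have h1 : S' \ J = (S \ J).erase j0 := by
          simp [hS', Finset.erase_sdiff_comm]
        have h2 : j0 ∈ S \ J := Finset.mem_sdiff.mpr ⟨hj0S, hj0J⟩
        rw [h1, Finset.card_erase_of_mem h2]
        omega
      have hS'mem := ih S' hcard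
      -- multiplication by row j0 as a linear map
      let f : (Fin k → ℝ) →ₗ[ℝ] (Fin k → ℝ) :=
        { toFun := fun x j => x j * m j0 j
          map_add' := by intro x y; funext j; simp [add_mul]
          map_smul' := by intro cc x; funext j; simp [mul_assoc] }
      have hmap : ∀ x ∈ V, f x ∈ V := by
        intro x hx
        have hle : V ≤ V.comap f := by
          rw [hVdef]
          apply Submodule.span_le.mpr
          rintro _ ⟨ℓ, rfl⟩
          have hj0T : j0 ∉ T ℓ := fun h =>
            hj0J (Finset.mem_biUnion.mpr ⟨ℓ, Finset.mem_univ _, h⟩)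
          have := hext ℓ j0 hj0J
          have heq : (f fun j => ∏ i ∈ T ℓ, m i j) =
              (fun j => ∏ i ∈ T ℓ ∪ {j0}, m i j) := by
            funext j
            rw [Finset.union_comm, ← Finset.insert_eq,
              Finset.prod_insert hj0T]
            simp [f, mul_comm]
          simpa [Submodule.mem_comap, heq] using this
        exact hle hx
      have hfS : f (fun j => ∏ i ∈ S', m i j) = (fun j => ∏ i ∈ S, m i j) := by
        funext j
        have hSins : S = insert j0 S' := by
          simp [hS', Finset.insert_erase hj0S]
        rw [hSins, Finset.prod_insert (Finset.notMem_erase _ _)]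
        simp [f, mul_comm, hS']
      have := hmap _ hS'mem
      rwa [hfS] at this
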